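/- Let L be even. The L×L grid graph contains a set S of L vertices (namely the diagonal S = {(i,i) : i ∈ [L]}) such that for every perfect pairing of S into L/2 pairs, there exists a family of L/2 pairwise edge-disjoint paths connecting the vertices within each pair. Consequently the parallel routing number of P_L × P_L is at least L/2. -/

import Mathlib

open SimpleGraph

/-- `a, b : Fin k → V` form a pairing of the set `S` into `k` pairs: all the `2k`
values are distinct and they exhaust `S`. -/
def IsPairing {V : Type*} (S : Finset V) {k : ℕ} (a b : Fin k → V) : Prop :=
  Function.Injective (Sum.elim a b : Fin k ⊕ Fin k → V) ∧
  ∀ v, v ∈ S ↔ ((∃ r, a r = v) ∨ ∃ r, b r = v)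

/-- A subset `S` of vertices of `G` is parallel-routable: it has even size and for
every pairing of its elements there is a family of pairwise edge-disjoint paths
connecting the pairs. -/
def ParallelRoutable {V : Type*} (G : SimpleGraph V) (S : Finset V) : Prop :=
  Even S.card ∧
  ∀ (k : ℕ) (a b : Fin k → V), IsPairing S a b →
    ∃ π : (r : Fin k) → G.Walk (a r) (b r),
      (∀ r, (π r).IsPath) ∧
      ∀ r s : Fin k, r ≠ s → ∀ e, e ∈ (π r).edges → e ∉ (π s).edges

section Aux

variable {α β : Type*} {G : SimpleGraph α} {H : SimpleGraph β}

lemma aux_isPath_append {u v w : α} {p : G.Walk u v} {q : G.Walk v w}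
    (hp : p.IsPath) (hq : q.IsPath)
    (h : ∀ x, x ∈ p.support → x ∈ q.support → x = v) :
    (p.append q).IsPath := by
  rw [Walk.isPath_def, Walk.support_append]
  refine List.Nodup.append (hp.support_nodup) (hq.support_nodup.tail) ?_
  intro x hxp hxq
  have hxq' : x ∈ q.support := List.mem_of_mem_tail hxq
  have hx : x = v := h x hxp hxq'
  rw [hx] at hxq
  have hnd := hq.support_nodup
  rw [Walk.support_eq_cons q] at hnd
  exact (List.nodup_cons.mp hnd).1 hxq

lemma aux_support_boxProdRight {b₁ b₂ : β} (a : α) (w : H.Walk b₁ b₂) {v : α × β}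
    (hv : v ∈ (w.boxProdRight G a).support) : v.1 = a := by
  replace hv : v ∈ (w.map (G.boxProdRight H a).toHom).support := hv; rw [Walk.support_map] at hv
  obtain ⟨u, -, rfl⟩ := List.mem_map.mp hv
  rfl

lemma aux_support_boxProdLeft {a₁ a₂ : α} (b : β) (w : G.Walk a₁ a₂) {v : α × β}
    (hv : v ∈ (w.boxProdLeft H b).support) : v.2 = b := by
  replace hv : v ∈ (w.map (G.boxProdLeft H b).toHom).support := hv; rw [Walk.support_map] at hv
  obtain ⟨u, -, rfl⟩ := List.mem_map.mp hv
  rfl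

lemma aux_edges_boxProdRight {b₁ b₂ : β} (a : α) (w : H.Walk b₁ b₂) {e : Sym2 (α × β)}
    (he : e ∈ (w.boxProdRight G a).edges) : ∀ v ∈ e, v.1 = a := by
  replace he : e ∈ (w.map (G.boxProdRight H a).toHom).edges := he; rw [Walk.edges_map] at he
  obtain ⟨e', -, rfl⟩ := List.mem_map.mp he
  intro v hv
  obtain ⟨u, -, rfl⟩ := Sym2.mem_map.mp hv
  rfl

lemma aux_edges_boxProdLeft {a₁ a₂ : α} (b : β) (w : G.Walk a₁ a₂) {e : Sym2 (α × β)}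
    (he : e ∈ (w.boxProdLeft H b).edges) : ∀ v ∈ e, v.2 = b := by
  replace he : e ∈ (w.map (G.boxProdLeft H b).toHom).edges := he; rw [Walk.edges_map] at he
  obtain ⟨e', -, rfl⟩ := List.mem_map.mp he
  intro v hv
  obtain ⟨u, -, rfl⟩ := Sym2.mem_map.mp hv
  rfl

lemma aux_isPath_boxProdRight {b₁ b₂ : β} (a : α) {w : H.Walk b₁ b₂} (hw : w.IsPath) :
    (w.boxProdRight G a).IsPath := by
  rw [Walk.boxProdRight]
  exact Walk.map_isPath_of_injective (fun x y h => (SimpleGraph.boxProdRight G H a).injective h) hw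

lemma aux_isPath_boxProdLeft {a₁ a₂ : α} (b : β) {w : G.Walk a₁ a₂} (hw : w.IsPath) :
    (w.boxProdLeft H b).IsPath := by
  rw [Walk.boxProdLeft]
  exact Walk.map_isPath_of_injective (fun x y h => (SimpleGraph.boxProdLeft G H b).injective h) hw

/-- The canonical route from `(i,i)` to `(j,j)` in the grid: go along row `i`
(first coordinate fixed to `i`), then along column `j`. -/
noncomputable def diagRoute {L : ℕ} (hc : (pathGraph L).Preconnected) (i j : Fin L) :
    ((pathGraph L).boxProd (pathGraph L)).Walk (i, i) (j, j) :=
  ((hc i j).some.bypass.boxProdRight (pathGraph L) i).append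
    ((hc i j).some.bypass.boxProdLeft (pathGraph L) j)

lemma diagRoute_isPath {L : ℕ} (hc : (pathGraph L).Preconnected) (i j : Fin L) :
    (diagRoute hc i j).IsPath := by
  refine aux_isPath_append (aux_isPath_boxProdRight _ (Walk.bypass_isPath _))
    (aux_isPath_boxProdLeft _ (Walk.bypass_isPath _)) ?_
  intro x hx1 hx2
  have h1 := aux_support_boxProdRight _ _ hx1
  have h2 := aux_support_boxProdLeft _ _ hx2
  exact Prod.ext h1 h2

lemma diagRoute_edges {L : ℕ} (hc : (pathGraph L).Preconnected) (i j : Fin L) {e}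
    (he : e ∈ (diagRoute hc i j).edges) :
    (∀ v ∈ e, v.1 = i) ∨ (∀ v ∈ e, v.2 = j) := by
  rw [diagRoute, Walk.edges_append, List.mem_append] at he
  rcases he with he | he
  · exact Or.inl (aux_edges_boxProdRight _ _ he)
  · exact Or.inr (aux_edges_boxProdLeft _ _ he)

end Aux

/-- for even `L`, the diagonal of the `L × L` grid graph is a
parallel-routable set of `L` vertices; hence `k(P_L × P_L) ≥ L/2`. -/
theorem stmt1 (L : ℕ) (hL : Even L) (hpos : 0 < L) :
    (Finset.image (fun i : Fin L => ((i, i) : Fin L × Fin L)) Finset.univ).card = L ∧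
    ParallelRoutable ((pathGraph L).boxProd (pathGraph L))
      (Finset.image (fun i : Fin L => ((i, i) : Fin L × Fin L)) Finset.univ) := by
  obtain ⟨M, rfl⟩ := Nat.exists_eq_succ_of_ne_zero hpos.ne'
  have hc : (pathGraph (M + 1)).Preconnected := (pathGraph_connected M).preconnected
  have hinjdiag : Function.Injective (fun i : Fin (M + 1) => ((i, i) : Fin (M+1) × Fin (M+1))) :=
    fun x y h => congrArg Prod.fst h
  have hcard : (Finset.image (fun i : Fin (M+1) => ((i, i) : Fin (M+1) × Fin (M+1)))
      Finset.univ).card = M + 1 := by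
    rw [Finset.card_image_of_injective _ hinjdiag, Finset.card_univ, Fintype.card_fin]
  refine ⟨hcard, ⟨by rw [hcard]; exact hL, ?_⟩⟩
  rintro k a b ⟨hinj, hcov⟩
  -- each endpoint is on the diagonal
  have ha : ∀ r, a r = ((a r).1, (a r).1) := by
    intro r
    have : a r ∈ Finset.image (fun i : Fin (M+1) => ((i, i) : Fin (M+1) × Fin (M+1)))
        Finset.univ := (hcov (a r)).mpr (Or.inl ⟨r, rfl⟩)
    obtain ⟨i, -, hi⟩ := Finset.mem_image.mp this
    rw [← hi]
  have hb : ∀ r, b r = ((b r).1, (b r).1) := by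
    intro r
    have : b r ∈ Finset.image (fun i : Fin (M+1) => ((i, i) : Fin (M+1) × Fin (M+1)))
        Finset.univ := (hcov (b r)).mpr (Or.inr ⟨r, rfl⟩)
    obtain ⟨i, -, hi⟩ := Finset.mem_image.mp this
    rw [← hi]
  refine ⟨fun r => (diagRoute hc (a r).1 (b r).1).copy (ha r).symm (hb r).symm, ?_, ?_⟩
  · intro r
    rw [Walk.isPath_copy]
    exact diagRoute_isPath hc _ _
  · intro r s hrs e her hes
    rw [Walk.edges_copy] at her hes
    revert her hes
    induction e using Sym2.ind with | _ u w => ?_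
    intro her hes
    have hadj : ((pathGraph (M+1)).boxProd (pathGraph (M+1))).Adj u w := by
      have := Walk.edges_subset_edgeSet _ her
      rwa [mem_edgeSet] at this
    have hne : u ≠ w := hadj.ne
    have hm1 : u ∈ (s(u, w) : Sym2 (Fin (M+1) × Fin (M+1))) := Sym2.mem_mk_left _ _
    have hm2 : w ∈ (s(u, w) : Sym2 (Fin (M+1) × Fin (M+1))) := Sym2.mem_mk_right _ _
    rcases diagRoute_edges hc _ _ her with hr | hr <;>
      rcases diagRoute_edges hc _ _ hes with hs | hs
    · -- both horizontal: rows (a r).1 = (a s).1, so a r = a s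
      have : (a r).1 = (a s).1 := (hr _ hm1).symm.trans (hs _ hm1)
      have : a r = a s := by rw [ha r, ha s, this]
      exact hrs (Sum.inl_injective (hinj (show Sum.elim a b (Sum.inl r) = Sum.elim a b (Sum.inl s) from this)))
    · -- horizontal r, vertical s: endpoints agree in both coordinates
      exact hne (Prod.ext ((hr _ hm1).trans (hr _ hm2).symm)
        ((hs _ hm1).trans (hs _ hm2).symm))
    · -- vertical r, horizontal s
      exact hne (Prod.ext ((hs _ hm1).trans (hs _ hm2).symm)
        ((hr _ hm1).trans (hr _ hm2).symm))
    · -- both vertical: columns (b r).1 = (b s).1, so b r = b s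
      have : (b r).1 = (b s).1 := (hr _ hm1).symm.trans (hs _ hm1)
      have : b r = b s := by rw [hb r, hb s, this]
      exact hrs (Sum.inr_injective (hinj (show Sum.elim a b (Sum.inr r) = Sum.elim a b (Sum.inr s) from this)))
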